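/- Let (T, 𝒜) be a measurable space and ν a finite signed measure on T with total variation measure |ν|. Let d ≥ 1 be an integer, let σ be a probability measure on ℂ^d, and let α ≥ 2 and C > 0 be real numbers such that ∫_{ℂ^d} |log |⟨a, v⟩||^α dσ(a) ≤ C for every v ∈ ℂ^d with ‖v‖ = 1. Let ρ : T → ℂ^d be measurable with ‖ρ(x)‖ = 1 for every x ∈ T. Then ∫_{ℂ^d} ( ∫_T ∫_T |log |⟨a, ρ(x)⟩|| · |log |⟨a, ρ(y)⟩|| d|ν|(x) d|ν|(y) ) dσ(a) ≤ C^{2/α} (|ν|(T))². -/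

import Mathlib

open MeasureTheory
open scoped InnerProductSpace ENNReal

noncomputable instance (n : ℕ) : MeasurableSpace (EuclideanSpace ℂ (Fin n)) :=
  MeasurableSpace.comap WithLp.ofLp MeasurableSpace.pi
instance (n : ℕ) : BorelSpace (EuclideanSpace ℂ (Fin n)) := PiLp.borelSpace 2 (X := fun _ : Fin n => ℂ)

lemma jensen_rpow' {A : Type*} [MeasurableSpace A] (μ : Measure A) [IsProbabilityMeasure μ]
    {G : A → ℝ≥0∞} (hG : AEMeasurable G μ) {r : ℝ} (hr0 : 0 < r) (hr1 : r ≤ 1) :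
    ∫⁻ a, G a ^ r ∂μ ≤ (∫⁻ a, G a ∂μ) ^ r := by
  rcases eq_or_lt_of_le hr1 with h1 | h1
  · subst h1; simp
  · have hp : (1/r).HolderConjugate (1/(1-r)) := by
      rw [Real.holderConjugate_iff]
      constructor
      · rw [lt_div_iff₀ hr0]; linarith
      · rw [one_div, one_div, inv_inv, inv_inv]; ring
    have key := ENNReal.lintegral_mul_le_Lp_mul_Lq μ hp
      (f := fun a => G a ^ r) (g := fun _ => 1) (hG.pow_const r) aemeasurable_const
    simp only [Pi.mul_apply, mul_one, ENNReal.one_rpow, lintegral_const,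
      measure_univ, one_mul] at key
    calc ∫⁻ a, G a ^ r ∂μ ≤ (∫⁻ a, (G a ^ r) ^ (1/r) ∂μ) ^ (1 / (1/r)) := key
    _ = (∫⁻ a, G a ∂μ) ^ r := by
        rw [one_div_one_div]
        congr 1
        refine lintegral_congr fun a => ?_
        rw [← ENNReal.rpow_mul, mul_one_div, div_self hr0.ne', ENNReal.rpow_one]

/-- The `B₃`-term estimate: under the logarithmic moment condition of exponent `α ≥ 2`,
`∫_{ℂ^d} ∫_T ∫_T |log|⟨a,ρ(x)⟩|| · |log|⟨a,ρ(y)⟩|| d|ν|(x) d|ν|(y) dσ(a) ≤ C^{2/α}(|ν|(T))²`. -/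
theorem B3_term_estimate
    {T : Type*} [MeasurableSpace T] (ν : SignedMeasure T)
    (d : ℕ) (hd : 1 ≤ d)
    (σ : Measure (EuclideanSpace ℂ (Fin d))) [IsProbabilityMeasure σ]
    (α C : ℝ) (hα : 2 ≤ α) (hC : 0 < C)
    (hmom : ∀ v : EuclideanSpace ℂ (Fin d), ‖v‖ = 1 →
      ∫⁻ a, ENNReal.ofReal (|Real.log ‖⟪a, v⟫_ℂ‖| ^ α) ∂σ ≤ ENNReal.ofReal C)
    (ρ : T → EuclideanSpace ℂ (Fin d)) (hρ : Measurable ρ)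
    (hρ1 : ∀ x, ‖ρ x‖ = 1) :
    ∫⁻ a, (∫⁻ y, (∫⁻ x, ENNReal.ofReal |Real.log ‖⟪a, ρ x⟫_ℂ‖| *
            ENNReal.ofReal |Real.log ‖⟪a, ρ y⟫_ℂ‖| ∂ν.totalVariation) ∂ν.totalVariation) ∂σ ≤
      ENNReal.ofReal (C ^ (2 / α)) * (ν.totalVariation Set.univ) ^ 2 := by
  set μ := ν.totalVariation with hμ
  haveI : IsFiniteMeasure μ := by
    have h1 := ν.toJordanDecomposition.posPart_finite
    have h2 := ν.toJordanDecomposition.negPart_finite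
    rw [hμ, SignedMeasure.totalVariation]
    infer_instance
  have hα0 : (0:ℝ) < α := by linarith
  have h1α : (1:ℝ) < α := by linarith
  set q : ℝ := α / (α - 1) with hq
  have hpq : α.HolderConjugate q := by
    rw [Real.holderConjugate_iff]
    constructor
    · exact h1α
    · rw [hq]; field_simp; ring
  set F : EuclideanSpace ℂ (Fin d) → T → ℝ≥0∞ := fun a x => ENNReal.ofReal |Real.log ‖⟪a, ρ x⟫_ℂ‖| with hF
  have hFm : Measurable (Function.uncurry F) := by
    have h1 : Measurable fun p : EuclideanSpace ℂ (Fin d) × T => (p.1, ρ p.2) := by fun_prop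
    have h2 : Measurable fun p : EuclideanSpace ℂ (Fin d) × EuclideanSpace ℂ (Fin d) => ⟪p.1, p.2⟫_ℂ := continuous_inner.measurable
    exact ((h2.comp h1).norm.log.abs).ennreal_ofReal
  have hFa : ∀ a : EuclideanSpace ℂ (Fin d), Measurable (F a) := fun a => hFm.of_uncurry_left
  -- the inner double integral is a square
  have hsq : ∀ a : EuclideanSpace ℂ (Fin d), (∫⁻ y, (∫⁻ x, F a x * F a y ∂μ) ∂μ) = (∫⁻ x, F a x ∂μ) ^ 2 := by
    intro a
    have : ∀ y, (∫⁻ x, F a x * F a y ∂μ) = (∫⁻ x, F a x ∂μ) * F a y := fun y =>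
      lintegral_mul_const _ (hFa a)
    simp_rw [this]
    rw [lintegral_const_mul _ (hFa a), sq]
  show (∫⁻ a, (∫⁻ y, (∫⁻ x, F a x * F a y ∂μ) ∂μ) ∂σ) ≤
      ENNReal.ofReal (C ^ (2 / α)) * (μ Set.univ) ^ 2
  calc ∫⁻ a, (∫⁻ y, (∫⁻ x, F a x * F a y ∂μ) ∂μ) ∂σ
      = ∫⁻ a, (∫⁻ x, F a x ∂μ) ^ 2 ∂σ := by exact lintegral_congr hsq
    _ ≤ ∫⁻ a, (∫⁻ x, F a x ^ α ∂μ) ^ (2/α) * (μ Set.univ) ^ (2/q) ∂σ := by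
        refine lintegral_mono fun a => ?_
        have key := ENNReal.lintegral_mul_le_Lp_mul_Lq μ hpq
          (f := F a) (g := fun _ => 1) (hFa a).aemeasurable aemeasurable_const
        simp only [Pi.mul_apply, mul_one, ENNReal.one_rpow, lintegral_const, one_mul] at key
        calc (∫⁻ x, F a x ∂μ) ^ 2
            ≤ ((∫⁻ x, F a x ^ α ∂μ) ^ (1/α) * (μ Set.univ) ^ (1/q)) ^ 2 :=
              pow_le_pow_left₀ (zero_le) key 2
          _ = (∫⁻ x, F a x ^ α ∂μ) ^ (2/α) * (μ Set.univ) ^ (2/q) := by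
              rw [mul_pow, ← ENNReal.rpow_natCast ((∫⁻ x, F a x ^ α ∂μ) ^ (1/α)) 2,
                ← ENNReal.rpow_natCast ((μ Set.univ) ^ (1/q)) 2,
                ← ENNReal.rpow_mul, ← ENNReal.rpow_mul]
              rw [show (1/α) * (2:ℕ) = 2/α by push_cast; ring,
                show (1/q) * (2:ℕ) = 2/q by push_cast; ring]
    _ = (μ Set.univ) ^ (2/q) * ∫⁻ a, (∫⁻ x, F a x ^ α ∂μ) ^ (2/α) ∂σ := by
        rw [← lintegral_const_mul']
        · simp_rw [mul_comm]
        · exact (ENNReal.rpow_lt_top_of_nonneg (div_nonneg (by norm_num) hpq.symm.pos.le) (measure_ne_top μ _)).ne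
    _ ≤ (μ Set.univ) ^ (2/q) * (∫⁻ a, (∫⁻ x, F a x ^ α ∂μ) ∂σ) ^ (2/α) := by
        gcongr
        refine jensen_rpow' σ ?_ (by positivity) ?_
        · exact (hFm.pow_const α).lintegral_prod_right'.aemeasurable
        · rw [div_le_one hα0]; exact hα
    _ ≤ (μ Set.univ) ^ (2/q) * (ENNReal.ofReal C * μ Set.univ) ^ (2/α) := by
        gcongr
        rw [lintegral_lintegral_swap (hFm.pow_const α).aemeasurable]
        have hb : ∀ x, (∫⁻ a, F a x ^ α ∂σ) ≤ ENNReal.ofReal C := by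
          intro x
          have := hmom (ρ x) (hρ1 x)
          refine le_trans (le_of_eq ?_) this
          refine lintegral_congr fun a => ?_
          rw [hF]
          exact ENNReal.ofReal_rpow_of_nonneg (abs_nonneg _) hα0.le
        calc ∫⁻ x, (∫⁻ a, F a x ^ α ∂σ) ∂μ ≤ ∫⁻ _, ENNReal.ofReal C ∂μ :=
              lintegral_mono hb
          _ = ENNReal.ofReal C * μ Set.univ := by rw [lintegral_const, mul_comm]
    _ = ENNReal.ofReal (C ^ (2/α)) * (μ Set.univ) ^ 2 := by
        rw [ENNReal.mul_rpow_of_nonneg _ _ (by positivity)]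
        rw [show ((μ Set.univ) ^ (2/q) * (ENNReal.ofReal C ^ (2/α) * (μ Set.univ) ^ (2/α)))
            = ENNReal.ofReal C ^ (2/α) * ((μ Set.univ) ^ (2/q) * (μ Set.univ) ^ (2/α))
            by ring]
        rw [ENNReal.ofReal_rpow_of_pos hC]
        congr 1
        rw [← ENNReal.rpow_add_of_nonneg _ _ (div_nonneg (by norm_num) hpq.symm.pos.le) (by positivity)]
        have h2 : 2/q + 2/α = 2 := by
          have h := hpq.inv_add_inv_eq_one
          have : 2/q + 2/α = 2*(α⁻¹ + q⁻¹) := by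
            rw [div_eq_mul_inv, div_eq_mul_inv]; ring
          rw [this, h]; norm_num
        rw [h2, ← ENNReal.rpow_natCast]
        norm_num
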